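/- arXiv:2503.02740 — 2 statements merged into one kernel-verified Lean document; each statement's English description precedes it below -/
import Mathlib

section
/- The domain 𝒮 of separable preferences is maximal for the class 𝒢 of all tops-only voting rules on 𝒮 that satisfy participation; that is, (i) 𝒮 itself satisfies the two defining conditions of maximality for 𝒢, and (ii) any domain 𝒮* with 𝒮 ⊆ 𝒮* ⊆ 𝒰_𝒪 that is maximal for 𝒢 equals 𝒮. Here maximality of 𝒮* for 𝒢 means: (a) for each f ∈ 𝒢 the tops-only extension of f to 𝒮* satisfies participation, and (b) for each preference P_0 ∈ 𝒰_𝒪 \ 𝒮* there is f ∈ 𝒢 whose tops-only extension to 𝒮* ∪ {P_0} violates participation. -/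
/-! ## Basic framework: preferences, profiles, voting rules, axioms -/

/-- A preference is a strict linear order on the set `A` of alternatives, encoded as a
`LinearOrder` structure on `A`; alternative `x` is strictly preferred to `y` iff `y < x`
(i.e. "greater is better"). -/
abbrev Pref (A : Type*) := LinearOrder A

/-- Strict preference: `x` is strictly preferred to `y` under `p`. -/
def Pref.pref {A : Type*} (p : Pref A) (x y : A) : Prop := p.lt y x

/-- Weak preference (the weak counterpart `R` of the strict preference `P`):
`x` is weakly preferred to `y` under `p`. -/
def Pref.wpref {A : Type*} (p : Pref A) (x y : A) : Prop := p.le y x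

/-- The top (most preferred) alternative of a preference. -/
noncomputable def Pref.top {A : Type*} [Fintype A] [Nonempty A] (p : Pref A) : A :=
  @Finset.max' A p Finset.univ Finset.univ_nonempty

/-- The bottom (least preferred) alternative of a preference. -/
noncomputable def Pref.bot {A : Type*} [Fintype A] [Nonempty A] (p : Pref A) : A :=
  @Finset.min' A p Finset.univ Finset.univ_nonempty

/-- A profile over the society `N` (a finite set of voters, indexed by naturals):
it assigns a preference to each member of `N`. -/
abbrev Profile (A : Type*) (N : Finset ℕ) := (i : ℕ) → i ∈ N → Pref A

/-- The profile `P` takes values in the domain `D` of preferences. -/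
def Profile.inDomain {A : Type*} {N : Finset ℕ} (P : Profile A N) (D : Set (Pref A)) : Prop :=
  ∀ i (hi : i ∈ N), P i hi ∈ D

/-- A (variable-population) voting rule: it assigns an alternative to every society
together with a profile over it. -/
abbrev Rule (A : Type*) := (N : Finset ℕ) → Profile A N → A

/-- Ontoness on the domain `D`: for every society and every alternative, some
`D`-profile realizes that alternative. -/
def OntoOn {A : Type*} (D : Set (Pref A)) (f : Rule A) : Prop :=
  ∀ N : Finset ℕ, N.Nonempty → ∀ a : A, ∃ P : Profile A N, P.inDomain D ∧ f N P = a

/-- Tops-onliness on the domain `D`: two `D`-profiles with the same tops get the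
same outcome. -/
def TopsOnlyOn {A : Type*} [Fintype A] [Nonempty A] (D : Set (Pref A)) (f : Rule A) : Prop :=
  ∀ N : Finset ℕ, N.Nonempty → ∀ P P' : Profile A N, P.inDomain D → P'.inDomain D →
    (∀ i (hi : i ∈ N), (P i hi).top = (P' i hi).top) → f N P = f N P'

/-- False-name-proofness on the domain `D`: if a voter `i` of the society `N` casts,
under fresh identities `N'`, extra votes identical to her own preference, the outcome
does not improve for her. -/
def FalseNameProofOn {A : Type*} (D : Set (Pref A)) (f : Rule A) : Prop :=
  ∀ N N' : Finset ℕ, N.Nonempty → N'.Nonempty → Disjoint N N' →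
    ∀ P : Profile A (N ∪ N'), P.inDomain D →
      ∀ i (hi : i ∈ N),
        (∀ j (hj : j ∈ N'),
            P j (Finset.mem_union_right N hj) = P i (Finset.mem_union_left N' hi)) →
        (P i (Finset.mem_union_left N' hi)).wpref
          (f N (fun j hj => P j (Finset.mem_union_left N' hj)))
          (f (N ∪ N') P)

/-- Participation on the domain `D`: no voter gains by abstaining. -/
def ParticipationOn {A : Type*} (D : Set (Pref A)) (f : Rule A) : Prop :=
  ∀ N : Finset ℕ, 2 ≤ N.card → ∀ P : Profile A N, P.inDomain D →
    ∀ i (hi : i ∈ N),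
      (P i hi).wpref (f N P) (f (N.erase i) (fun j hj => P j (Finset.mem_of_mem_erase hj)))

lemma mem_of_mem_image_perm {σ : Equiv.Perm ℕ} {N : Finset ℕ} {j : ℕ}
    (hj : j ∈ N.image σ) : σ.symm j ∈ N := by
  obtain ⟨i, hi, rfl⟩ := Finset.mem_image.mp hj
  simpa using hi

/-- The permuted profile `σ(P_N)` over the society `σ(N)`: voter `σ i` gets the
preference `P i`. -/
def permProfile {A : Type*} (σ : Equiv.Perm ℕ) {N : Finset ℕ} (P : Profile A N) :
    Profile A (N.image σ) :=
  fun j hj => P (σ.symm j) (mem_of_mem_image_perm hj)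

/-- Anonymity on the domain `D`: permuting the voters' identities does not change
the outcome. -/
def AnonymousOn {A : Type*} (D : Set (Pref A)) (f : Rule A) : Prop :=
  ∀ (σ : Equiv.Perm ℕ) (N : Finset ℕ), N.Nonempty → ∀ P : Profile A N, P.inDomain D →
    f (N.image σ) (permProfile σ P) = f N P

/-- Relabeling a preference along a permutation `γ` of the alternatives: in the new
preference, `γ x` is strictly preferred to `γ y` iff `x` was strictly preferred to `y`. -/
noncomputable def Pref.relabel {A : Type*} (p : Pref A) (γ : Equiv.Perm A) : Pref A :=
  @LinearOrder.lift' A A p γ.symm γ.symm.injective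

/-- Neutrality on the domain `D`: relabeling the alternatives by a permutation `γ`
relabels the outcome accordingly. -/
def NeutralOn {A : Type*} (D : Set (Pref A)) (f : Rule A) : Prop :=
  ∀ (γ : Equiv.Perm A) (N : Finset ℕ), N.Nonempty → ∀ P : Profile A N, P.inDomain D →
    γ (f N P) = f N (fun i hi => (P i hi).relabel γ)

/-! ## The domain of preferences over subsets of a set `O` of objects -/

/-- Object neutrality: permuting the objects by `μ` (which permutes every subset of
objects pointwise) relabels the outcome accordingly. -/
def ObjectNeutralOn {O : Type*} [Fintype O] [DecidableEq O]
    (D : Set (Pref (Finset O))) (f : Rule (Finset O)) : Prop :=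
  ∀ (μ : Equiv.Perm O) (N : Finset ℕ), N.Nonempty →
    ∀ P : Profile (Finset O) N, P.inDomain D →
      (f N P).image μ = f N (fun i hi => (P i hi).relabel μ.finsetCongr)

/-- A preference over subsets of objects is separable if adding an object `x ∉ S` to a
set `S` improves the set exactly when `{x}` is preferred to `∅`. -/
def Separable {O : Type*} [Fintype O] [DecidableEq O] (p : Pref (Finset O)) : Prop :=
  ∀ (S : Finset O) (x : O), x ∉ S → (p.pref (insert x S) S ↔ p.pref {x} (∅ : Finset O))

/-- The domain of separable preferences over subsets of objects. -/
def SepDom (O : Type*) [Fintype O] [DecidableEq O] : Set (Pref (Finset O)) :=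
  {p | Separable p}

/-- `t(P_N)`: the set of distinct top sets of the profile `P`. -/
noncomputable def distinctTops {O : Type*} [Fintype O] [DecidableEq O] {N : Finset ℕ}
    (P : Profile (Finset O) N) : Finset (Finset O) :=
  N.attach.image fun i => (P i.1 i.2).top

/-- The rule `f^>`: an object is chosen iff it belongs to strictly more than half of the
distinct top sets of the profile. -/
noncomputable def fGt (O : Type*) [Fintype O] [DecidableEq O] : Rule (Finset O) :=
  fun N P =>
    Finset.univ.filter fun x =>
      (distinctTops P).card < 2 * ((distinctTops P).filter fun T => x ∈ T).card

/-- The rule `f^≥`: an object is chosen iff it belongs to at least half of the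
distinct top sets of the profile. -/
noncomputable def fGe (O : Type*) [Fintype O] [DecidableEq O] : Rule (Finset O) :=
  fun N P =>
    Finset.univ.filter fun x =>
      (distinctTops P).card ≤ 2 * ((distinctTops P).filter fun T => x ∈ T).card

/-- `g` is the tops-only extension to the domain `Dbig` (⊇ separable preferences) of the
tops-only rule `f` defined on the separable domain: on every `Dbig`-profile `P`, `g`
agrees with the value of `f` at any separable profile `Q` having the same tops as `P`. -/
def IsTopsOnlyExtensionOn {O : Type*} [Fintype O] [DecidableEq O]
    (Dbig : Set (Pref (Finset O))) (f g : Rule (Finset O)) : Prop :=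
  ∀ N : Finset ℕ, N.Nonempty →
    ∀ P : Profile (Finset O) N, P.inDomain Dbig →
      ∀ Q : Profile (Finset O) N, Q.inDomain (SepDom O) →
        (∀ i (hi : i ∈ N), (P i hi).top = (Q i hi).top) → g N P = f N Q

/-- The class `𝒢` of all tops-only voting rules on the domain of separable preferences
that satisfy participation. -/
def RuleClassG (O : Type*) [Fintype O] [DecidableEq O] : Set (Rule (Finset O)) :=
  {f | TopsOnlyOn (SepDom O) f ∧ ParticipationOn (SepDom O) f}

/-- The domain `Dstar` (with `𝒮 ⊆ Dstar ⊆ 𝒰_𝒪`) is maximal for the class `G ⊆ 𝒢`: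
(a) for each `f ∈ G`, every tops-only extension of `f` to `Dstar` satisfies
participation; and (b) for each preference `P0 ∉ Dstar` there is `f ∈ G` such that every
tops-only extension of `f` to `Dstar ∪ {P0}` violates participation. -/
def MaximalForG (O : Type*) [Fintype O] [DecidableEq O]
    (Dstar : Set (Pref (Finset O))) (G : Set (Rule (Finset O))) : Prop :=
  (∀ f ∈ G, ∀ g : Rule (Finset O), IsTopsOnlyExtensionOn Dstar f g →
      ParticipationOn Dstar g) ∧
  (∀ P0 : Pref (Finset O), P0 ∉ Dstar →
      ∃ f ∈ G, ∀ g : Rule (Finset O), IsTopsOnlyExtensionOn (Dstar ∪ {P0}) f g →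
        ¬ ParticipationOn (Dstar ∪ {P0}) g)

section Aux
variable {O : Type*} [Fintype O] [DecidableEq O]

/-- The set of "good" objects of a preference. -/
noncomputable def goodSet (p : Pref (Finset O)) : Finset O :=
  @Finset.filter _ (fun x => p.lt ∅ {x}) (fun _ => p.toDecidableLT _ _) Finset.univ

lemma mem_goodSet {p : Pref (Finset O)} {x : O} :
    x ∈ goodSet p ↔ p.lt ∅ {x} := by
  simp [goodSet]

lemma sep_mono (p : Pref (Finset O)) (hp : Separable p) :
    ∀ n (A B : Finset O), (A \ B).card + (B \ A).card ≤ n →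
      B ∩ goodSet p ⊆ A ∩ goodSet p → A \ goodSet p ⊆ B \ goodSet p → p.le B A := by
  intro n
  induction n with
  | zero =>
    intro A B hc _ _
    have h1 : A \ B = ∅ := Finset.card_eq_zero.mp (by omega)
    have h2 : B \ A = ∅ := Finset.card_eq_zero.mp (by omega)
    have : A = B :=
      Finset.Subset.antisymm (Finset.sdiff_eq_empty_iff_subset.mp h1)
        (Finset.sdiff_eq_empty_iff_subset.mp h2)
    exact this ▸ @le_refl _ p.toPreorder B
  | succ n ih =>
    intro A B hc h1 h2
    by_cases hAB : A = B
    · exact hAB ▸ @le_refl _ p.toPreorder B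
    · have hne : (A \ B).Nonempty ∨ (B \ A).Nonempty := by
        by_contra h
        push_neg at h
        apply hAB
        apply Finset.Subset.antisymm
        · intro a ha
          by_contra hb
          exact absurd ⟨a, Finset.mem_sdiff.mpr ⟨ha, hb⟩⟩ (Finset.not_nonempty_iff_eq_empty.mpr h.1)
        · intro a ha
          by_contra hb
          exact absurd ⟨a, Finset.mem_sdiff.mpr ⟨ha, hb⟩⟩ (Finset.not_nonempty_iff_eq_empty.mpr h.2)
      rcases hne with ⟨x, hx⟩ | ⟨x, hx⟩
      · -- x ∈ A \ B, x must be good; B → insert x B improves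
        obtain ⟨hxA, hxB⟩ := Finset.mem_sdiff.mp hx
        have hxg : x ∈ goodSet p := by
          by_contra hg
          have := h2 (Finset.mem_sdiff.mpr ⟨hxA, hg⟩)
          exact hxB (Finset.mem_sdiff.mp this).1
        have hstep : p.lt B (insert x B) := (hp B x hxB).mpr (mem_goodSet.mp hxg)
        have hle1 : p.le B (insert x B) := @le_of_lt _ p.toPreorder _ _ hstep
        have hA : A \ insert x B = (A \ B).erase x := by
          ext a; simp [Finset.mem_sdiff, Finset.mem_erase, Finset.mem_insert]
          tauto
        have hB : insert x B \ A = B \ A := by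
          ext a
          simp only [Finset.mem_sdiff, Finset.mem_insert]
          constructor
          · rintro ⟨rfl | h, ha⟩
            · exact absurd hxA (by simpa using ha)
            · exact ⟨h, ha⟩
          · rintro ⟨h, ha⟩
            exact ⟨Or.inr h, ha⟩
        have hcard : (A \ insert x B).card + (insert x B \ A).card ≤ n := by
          rw [hA, hB, Finset.card_erase_of_mem hx]
          have : 1 ≤ (A \ B).card := Finset.card_pos.mpr ⟨x, hx⟩
          omega
        have hle2 : p.le (insert x B) A := by
          apply ih A (insert x B) hcard
          · intro y hy
            obtain ⟨hy1, hy2⟩ := Finset.mem_inter.mp hy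
            rcases Finset.mem_insert.mp hy1 with rfl | hy1
            · exact Finset.mem_inter.mpr ⟨hxA, hy2⟩
            · exact h1 (Finset.mem_inter.mpr ⟨hy1, hy2⟩)
          · intro y hy
            have := h2 hy
            obtain ⟨hy1, hy2⟩ := Finset.mem_sdiff.mp this
            exact Finset.mem_sdiff.mpr ⟨Finset.mem_insert_of_mem hy1, hy2⟩
        exact @le_trans _ p.toPreorder _ _ _ hle1 hle2
      · -- x ∈ B \ A, x must be bad; B → B.erase x weakly improves
        obtain ⟨hxB, hxA⟩ := Finset.mem_sdiff.mp hx
        have hxg : x ∉ goodSet p := by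
          intro hg
          have := h1 (Finset.mem_inter.mpr ⟨hxB, hg⟩)
          exact hxA (Finset.mem_inter.mp this).1
        have hnstep : ¬ p.lt (B.erase x) (insert x (B.erase x)) := by
          intro h
          exact hxg (mem_goodSet.mpr ((hp (B.erase x) x (Finset.notMem_erase _ _)).mp h))
        rw [Finset.insert_erase hxB] at hnstep
        have hle1 : p.le B (B.erase x) := (@not_lt _ p _ _).mp hnstep
        have hA : A \ B.erase x = A \ B := by
          ext a
          simp only [Finset.mem_sdiff, Finset.mem_erase, not_and]
          constructor
          · rintro ⟨ha, h⟩
            exact ⟨ha, fun hB => h (by rintro rfl; exact hxA ha) hB⟩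
          · rintro ⟨ha, h⟩
            exact ⟨ha, fun _ hB => h hB⟩
        have hB2 : B.erase x \ A = (B \ A).erase x := by
          ext a; simp [Finset.mem_sdiff, Finset.mem_erase]; tauto
        have hcard : (A \ B.erase x).card + (B.erase x \ A).card ≤ n := by
          rw [hA, hB2, Finset.card_erase_of_mem hx]
          have : 1 ≤ (B \ A).card := Finset.card_pos.mpr ⟨x, hx⟩
          omega
        have hle2 : p.le (B.erase x) A := by
          apply ih A (B.erase x) hcard
          · intro y hy
            obtain ⟨hy1, hy2⟩ := Finset.mem_inter.mp hy
            exact h1 (Finset.mem_inter.mpr ⟨Finset.mem_of_mem_erase hy1, hy2⟩)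
          · intro y hy
            have hy' := h2 hy
            obtain ⟨hy1, hy2⟩ := Finset.mem_sdiff.mp hy'
            have hyA := (Finset.mem_sdiff.mp hy).1
            refine Finset.mem_sdiff.mpr ⟨Finset.mem_erase.mpr ⟨?_, hy1⟩, hy2⟩
            rintro rfl; exact hxA hyA
        exact @le_trans _ p.toPreorder _ _ _ hle1 hle2

/-- Main monotonicity lemma for separable preferences. -/
lemma sep_le (p : Pref (Finset O)) (hp : Separable p) (A B : Finset O)
    (h1 : B ∩ goodSet p ⊆ A ∩ goodSet p) (h2 : A \ goodSet p ⊆ B \ goodSet p) :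
    p.le B A :=
  sep_mono p hp _ A B le_rfl h1 h2

/-- The top of a separable preference is its set of good objects. -/
lemma sep_top (p : Pref (Finset O)) (hp : Separable p) : p.top = goodSet p := by
  have h1 : p.le (goodSet p) p.top :=
    @Finset.le_max' _ p Finset.univ (goodSet p) (Finset.mem_univ _)
  have h2 : p.le p.top (goodSet p) := by
    apply sep_le p hp
    · exact fun y hy => Finset.mem_inter.mpr ⟨(Finset.mem_inter.mp hy).2, (Finset.mem_inter.mp hy).2⟩
    · simp
  exact @le_antisymm _ p.toPartialOrder _ _ h2 h1

end Aux
section Aux2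
variable {O : Type*} [Fintype O] [DecidableEq O]

/-- Utility of a set relative to target top `T`. -/
def sepUtil (T S : Finset O) : ℤ := ((S ∩ T).card : ℤ) - ((S \ T).card : ℤ)

lemma sepUtil_insert (T S : Finset O) (x : O) (hx : x ∉ S) :
    sepUtil T (insert x S) = sepUtil T S + (if x ∈ T then 1 else -1) := by
  by_cases hxT : x ∈ T
  · have h1 : insert x S ∩ T = insert x (S ∩ T) := Finset.insert_inter_of_mem hxT
    have h2 : insert x S \ T = S \ T := Finset.insert_sdiff_of_mem S hxT
    have hxmem : x ∉ S ∩ T := fun h => hx (Finset.mem_inter.mp h).1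
    simp [sepUtil, h1, h2, Finset.card_insert_of_notMem hxmem, hxT]
    push_cast; ring
  · have h1 : insert x S ∩ T = S ∩ T := Finset.insert_inter_of_notMem hxT
    have h2 : insert x S \ T = insert x (S \ T) := Finset.insert_sdiff_of_notMem S hxT
    have hxmem : x ∉ S \ T := fun h => hx (Finset.mem_sdiff.mp h).1
    simp [sepUtil, h1, h2, Finset.card_insert_of_notMem hxmem, hxT]
    push_cast; ring

/-- The embedding used to define `sepTop`. -/
noncomputable def sepEmb (T : Finset O) : Finset O → ℤ ×ₗ Fin (Fintype.card (Finset O)) :=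
  fun S => toLex (sepUtil T S, Fintype.equivFin (Finset O) S)

lemma sepEmb_inj (T : Finset O) : Function.Injective (sepEmb T) := by
  intro a b h
  have h2 := congrArg (fun z => (ofLex z).2) h
  simpa using (Fintype.equivFin (Finset O)).injective h2

/-- A separable preference whose top is `T`. -/
noncomputable def sepTop (T : Finset O) : Pref (Finset O) :=
  LinearOrder.lift' (sepEmb T) (sepEmb_inj T)

lemma sepTop_lt_iff (T A B : Finset O) :
    (sepTop T).lt A B ↔ sepEmb T A < sepEmb T B := Iff.rfl

lemma sepTop_lt_of_util {T A B : Finset O} (h : sepUtil T A < sepUtil T B) :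
    (sepTop T).lt A B := by
  rw [sepTop_lt_iff]
  exact Prod.Lex.lt_iff.mpr (Or.inl h)

lemma sepTop_not_lt_of_util {T A B : Finset O} (h : sepUtil T B ≤ sepUtil T A) :
    ¬ (sepTop T).lt A B ∨ sepUtil T A = sepUtil T B := by
  by_cases he : sepUtil T A = sepUtil T B
  · exact Or.inr he
  · left
    rw [sepTop_lt_iff]
    intro hlt
    rcases Prod.Lex.lt_iff.mp hlt with h1 | ⟨h1, _⟩
    · exact absurd h1 (by simpa [sepEmb] using not_lt.mpr h)
    · exact he (by simpa [sepEmb] using h1)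

lemma sepTop_sep (T : Finset O) : Separable (sepTop T) := by
  intro S x hx
  have hins := sepUtil_insert T S x hx
  have hsing : sepUtil T ({x} : Finset O) = if x ∈ T then 1 else -1 := by
    have : ({x} : Finset O) = insert x ∅ := rfl
    rw [this, sepUtil_insert T ∅ x (Finset.notMem_empty x)]
    simp [sepUtil]
  have hempty : sepUtil T (∅ : Finset O) = 0 := by simp [sepUtil]
  unfold Pref.pref
  by_cases hxT : x ∈ T
  · simp only [hxT, if_true] at hins hsing
    constructor
    · intro _; exact sepTop_lt_of_util (by omega)
    · intro _; exact sepTop_lt_of_util (by omega)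
  · simp only [hxT, if_false] at hins hsing
    constructor
    · intro h
      rcases sepTop_not_lt_of_util (A := S) (B := insert x S) (T := T) (by omega) with hn | he
      · exact absurd h hn
      · omega
    · intro h
      rcases sepTop_not_lt_of_util (A := (∅ : Finset O)) (B := ({x} : Finset O)) (T := T)
        (by omega) with hn | he
      · exact absurd h hn
      · omega

lemma sepTop_mem : ∀ T : Finset O, sepTop T ∈ SepDom O := fun T => sepTop_sep T

lemma goodSet_sepTop (T : Finset O) : goodSet (sepTop T) = T := by
  ext x
  rw [mem_goodSet]
  have hsing : sepUtil T ({x} : Finset O) = if x ∈ T then 1 else -1 := by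
    have : ({x} : Finset O) = insert x ∅ := rfl
    rw [this, sepUtil_insert T ∅ x (Finset.notMem_empty x)]
    simp [sepUtil]
  constructor
  · intro h
    by_contra hxT
    rcases sepTop_not_lt_of_util (A := (∅ : Finset O)) (B := ({x} : Finset O)) (T := T)
      (by simp [hsing, hxT, sepUtil]) with hn | he
    · exact hn h
    · simp [hsing, hxT, sepUtil] at he
  · intro hxT
    exact sepTop_lt_of_util (by simp [hsing, hxT, sepUtil])

lemma sepTop_top (T : Finset O) : (sepTop T).top = T := by
  rw [sep_top _ (sepTop_sep T), goodSet_sepTop]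

end Aux2
section Aux3
variable {O : Type*} [Fintype O] [DecidableEq O]

lemma mem_distinctTops {N : Finset ℕ} {P : Profile (Finset O) N} {T : Finset O} :
    T ∈ distinctTops P ↔ ∃ j, ∃ hj : j ∈ N, (P j hj).top = T := by
  simp only [distinctTops, Finset.mem_image, Finset.mem_attach, true_and]
  constructor
  · rintro ⟨⟨j, hj⟩, h⟩; exact ⟨j, hj, h⟩
  · rintro ⟨j, hj, h⟩; exact ⟨⟨j, hj⟩, h⟩

lemma distinctTops_congr {N : Finset ℕ} {P P' : Profile (Finset O) N}
    (h : ∀ i (hi : i ∈ N), (P i hi).top = (P' i hi).top) :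
    distinctTops P = distinctTops P' := by
  ext T
  simp only [mem_distinctTops]
  constructor
  · rintro ⟨j, hj, hT⟩; exact ⟨j, hj, (h j hj) ▸ hT⟩
  · rintro ⟨j, hj, hT⟩; exact ⟨j, hj, (h j hj).symm ▸ hT⟩

lemma distinctTops_insert_erase {N : Finset ℕ} (P : Profile (Finset O) N)
    {i : ℕ} (hi : i ∈ N) :
    distinctTops P =
      insert ((P i hi).top)
        (distinctTops (N := N.erase i) (fun j hj => P j (Finset.mem_of_mem_erase hj))) := by
  ext T
  simp only [mem_distinctTops, Finset.mem_insert]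
  constructor
  · rintro ⟨j, hj, hT⟩
    by_cases hji : j = i
    · subst hji; exact Or.inl hT.symm
    · exact Or.inr ⟨j, Finset.mem_erase.mpr ⟨hji, hj⟩, hT⟩
  · rintro (rfl | ⟨j, hj, hT⟩)
    · exact ⟨i, hi, rfl⟩
    · exact ⟨j, Finset.mem_of_mem_erase hj, hT⟩

lemma fGt_topsOnly : TopsOnlyOn (SepDom O) (fGt O) := by
  intro N _ P P' _ _ h
  unfold fGt
  rw [distinctTops_congr h]

lemma fGe_topsOnly : TopsOnlyOn (SepDom O) (fGe O) := by
  intro N _ P P' _ _ h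
  unfold fGe
  rw [distinctTops_congr h]

lemma count_insert (𝒯 : Finset (Finset O)) (G : Finset O) (hG : G ∉ 𝒯) (x : O) :
    ((insert G 𝒯).filter fun T => x ∈ T).card =
      (𝒯.filter fun T => x ∈ T).card + (if x ∈ G then 1 else 0) := by
  rw [Finset.filter_insert]
  by_cases hx : x ∈ G
  · rw [if_pos hx, Finset.card_insert_of_notMem (fun h => hG (Finset.mem_filter.mp h).1),
      if_pos hx]
  · rw [if_neg hx, if_neg hx]
    omega

lemma fGt_participation : ParticipationOn (SepDom O) (fGt O) := by
  intro N _ P hP i hi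
  classical
  set p := P i hi with hp
  have hsep : Separable p := hP i hi
  set Pe : Profile (Finset O) (N.erase i) := fun j hj => P j (Finset.mem_of_mem_erase hj)
    with hPe
  have hT : distinctTops P = insert p.top (distinctTops Pe) := distinctTops_insert_erase P hi
  unfold Pref.wpref
  by_cases hmem : p.top ∈ (distinctTops Pe)
  · have : distinctTops P = (distinctTops Pe) := by rw [hT, Finset.insert_eq_self.mpr hmem]
    show p.le (fGt O (N.erase i) Pe) (fGt O N P)
    unfold fGt
    rw [this]
    exact @le_refl _ p.toPreorder _
  · show p.le (fGt O (N.erase i) Pe) (fGt O N P)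
    have hGtop : p.top = goodSet p := sep_top p hsep
    apply sep_le p hsep
    · intro x hx
      obtain ⟨hx1, hx2⟩ := Finset.mem_inter.mp hx
      have hx1' := (Finset.mem_filter.mp hx1).2
      have hxG : x ∈ p.top := hGtop ▸ hx2
      refine Finset.mem_inter.mpr ⟨Finset.mem_filter.mpr ⟨Finset.mem_univ _, ?_⟩, hx2⟩
      rw [hT, Finset.card_insert_of_notMem hmem, count_insert (distinctTops Pe) p.top hmem x, if_pos hxG]
      omega
    · intro x hx
      obtain ⟨hx1, hx2⟩ := Finset.mem_sdiff.mp hx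
      have hx1' := (Finset.mem_filter.mp hx1).2
      have hxG : x ∉ p.top := fun h => hx2 (hGtop ▸ h)
      rw [hT, Finset.card_insert_of_notMem hmem, count_insert (distinctTops Pe) p.top hmem x,
        if_neg hxG] at hx1'
      refine Finset.mem_sdiff.mpr ⟨Finset.mem_filter.mpr ⟨Finset.mem_univ _, ?_⟩, hx2⟩
      omega

lemma fGe_participation : ParticipationOn (SepDom O) (fGe O) := by
  intro N _ P hP i hi
  classical
  set p := P i hi with hp
  have hsep : Separable p := hP i hi
  set Pe : Profile (Finset O) (N.erase i) := fun j hj => P j (Finset.mem_of_mem_erase hj)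
    with hPe
  have hT : distinctTops P = insert p.top (distinctTops Pe) := distinctTops_insert_erase P hi
  unfold Pref.wpref
  by_cases hmem : p.top ∈ (distinctTops Pe)
  · have : distinctTops P = (distinctTops Pe) := by rw [hT, Finset.insert_eq_self.mpr hmem]
    show p.le (fGe O (N.erase i) Pe) (fGe O N P)
    unfold fGe
    rw [this]
    exact @le_refl _ p.toPreorder _
  · show p.le (fGe O (N.erase i) Pe) (fGe O N P)
    have hGtop : p.top = goodSet p := sep_top p hsep
    apply sep_le p hsep
    · intro x hx
      obtain ⟨hx1, hx2⟩ := Finset.mem_inter.mp hx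
      have hx1' := (Finset.mem_filter.mp hx1).2
      have hxG : x ∈ p.top := hGtop ▸ hx2
      refine Finset.mem_inter.mpr ⟨Finset.mem_filter.mpr ⟨Finset.mem_univ _, ?_⟩, hx2⟩
      rw [hT, Finset.card_insert_of_notMem hmem, count_insert (distinctTops Pe) p.top hmem x, if_pos hxG]
      omega
    · intro x hx
      obtain ⟨hx1, hx2⟩ := Finset.mem_sdiff.mp hx
      have hx1' := (Finset.mem_filter.mp hx1).2
      have hxG : x ∉ p.top := fun h => hx2 (hGtop ▸ h)
      rw [hT, Finset.card_insert_of_notMem hmem, count_insert (distinctTops Pe) p.top hmem x,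
        if_neg hxG] at hx1'
      refine Finset.mem_sdiff.mpr ⟨Finset.mem_filter.mpr ⟨Finset.mem_univ _, ?_⟩, hx2⟩
      omega

lemma fGt_mem : fGt O ∈ RuleClassG O := ⟨fGt_topsOnly, fGt_participation⟩
lemma fGe_mem : fGe O ∈ RuleClassG O := ⟨fGe_topsOnly, fGe_participation⟩

end Aux3
section Aux4
variable {O : Type*} [Fintype O] [DecidableEq O]

/-- Canonical tops-only extension exists. -/
lemma exists_extension (f : Rule (Finset O)) (hf : TopsOnlyOn (SepDom O) f)
    (D : Set (Pref (Finset O))) : ∃ g : Rule (Finset O), IsTopsOnlyExtensionOn D f g := by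
  refine ⟨fun N P => f N (fun i hi => sepTop (P i hi).top), ?_⟩
  intro N hN P _ Q hQ htops
  exact hf N hN _ Q (fun i hi => sepTop_mem _) hQ
    (fun i hi => by rw [sepTop_top, htops i hi])

lemma ext_mono {D D' : Set (Pref (Finset O))} (hDD : D' ⊆ D) {f g : Rule (Finset O)}
    (h : IsTopsOnlyExtensionOn D f g) : IsTopsOnlyExtensionOn D' f g :=
  fun N hN P hP => h N hN P (fun i hi => hDD (hP i hi))

lemma part_mono {A : Type*} {D D' : Set (Pref A)} (hDD : D' ⊆ D) {g : Rule A}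
    (h : ParticipationOn D g) : ParticipationOn D' g :=
  fun N hN P hP => h N hN P (fun i hi => hDD (hP i hi))

/-- The aggregator behind `fGt`. -/
noncomputable def Fgt (𝒯 : Finset (Finset O)) : Finset O :=
  Finset.univ.filter fun x => 𝒯.card < 2 * (𝒯.filter fun T => x ∈ T).card

/-- The aggregator behind `fGe`. -/
noncomputable def Fge (𝒯 : Finset (Finset O)) : Finset O :=
  Finset.univ.filter fun x => 𝒯.card ≤ 2 * (𝒯.filter fun T => x ∈ T).card

lemma fGt_eq (N : Finset ℕ) (P : Profile (Finset O) N) : fGt O N P = Fgt (distinctTops P) :=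
  rfl

lemma fGe_eq (N : Finset ℕ) (P : Profile (Finset O) N) : fGe O N P = Fge (distinctTops P) :=
  rfl

lemma mem_Fgt {𝒯 : Finset (Finset O)} {y : O} :
    y ∈ Fgt 𝒯 ↔ 𝒯.card < 2 * (𝒯.filter fun T => y ∈ T).card := by
  simp [Fgt]

lemma mem_Fge {𝒯 : Finset (Finset O)} {y : O} :
    y ∈ Fge 𝒯 ↔ 𝒯.card ≤ 2 * (𝒯.filter fun T => y ∈ T).card := by
  simp [Fge]

lemma card_filter_pair (A B : Finset O) (hAB : A ≠ B) (y : O) :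
    ((({A, B} : Finset (Finset O))).filter fun T => y ∈ T).card =
      (if y ∈ A then 1 else 0) + (if y ∈ B then 1 else 0) := by
  rw [show ({A, B} : Finset (Finset O)) = insert A {B} from rfl, Finset.filter_insert,
    Finset.filter_singleton]
  by_cases hA : y ∈ A <;> by_cases hB : y ∈ B <;>
    simp [hA, hB, Finset.card_insert_of_notMem, Finset.mem_singleton, hAB]

lemma card_filter_triple (A B C : Finset O) (hA : A ∉ ({B, C} : Finset (Finset O)))
    (hBC : B ≠ C) (y : O) :
    (((insert A {B, C} : Finset (Finset O))).filter fun T => y ∈ T).card =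
      (if y ∈ A then 1 else 0) + ((if y ∈ B then 1 else 0) + (if y ∈ C then 1 else 0)) := by
  rw [Finset.filter_insert]
  by_cases hyA : y ∈ A
  · rw [if_pos hyA, Finset.card_insert_of_notMem (fun h => hA (Finset.mem_of_mem_filter _ h)),
      card_filter_pair B C hBC y, if_pos hyA]
    omega
  · rw [if_neg hyA, if_neg hyA, card_filter_pair B C hBC y]
    omega

lemma card_pair (A B : Finset O) (hAB : A ≠ B) : ({A, B} : Finset (Finset O)).card = 2 := by
  rw [Finset.card_insert_of_notMem (by simp [hAB]), Finset.card_singleton]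

lemma card_triple (A B C : Finset O) (hA : A ∉ ({B, C} : Finset (Finset O))) (hBC : B ≠ C) :
    (insert A {B, C} : Finset (Finset O)).card = 3 := by
  rw [Finset.card_insert_of_notMem hA, card_pair B C hBC]

/-- Generic violation construction: society `{0,1,2}`, voter `0` has the
non-separable preference `P0`, voters `1`, `2` have separable preferences with
tops `T2`, `T3`. -/
lemma viol (F : Finset (Finset O) → Finset O) (f : Rule (Finset O))
    (hfF : ∀ (N : Finset ℕ) (P : Profile (Finset O) N), f N P = F (distinctTops P))
    (P0 : Pref (Finset O)) (T2 T3 : Finset O)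
    (hpref : P0.lt (F (insert P0.top {T2, T3})) (F ({T2, T3} : Finset (Finset O)))) :
    ∀ g : Rule (Finset O), IsTopsOnlyExtensionOn (SepDom O ∪ {P0}) f g →
      ¬ ParticipationOn (SepDom O ∪ {P0}) g := by
  intro g hg hpart
  set N : Finset ℕ := {0, 1, 2} with hN
  have hmemN : ∀ j, j ∈ N ↔ j = 0 ∨ j = 1 ∨ j = 2 := by
    intro j; simp [hN]
  set Pv : Profile (Finset O) N :=
    (fun j _ => if j = 0 then P0 else if j = 1 then sepTop T2 else sepTop T3) with hPv
  have hdom : Pv.inDomain (SepDom O ∪ {P0}) := by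
    intro j hj
    by_cases h0 : j = 0
    · simp only [hPv, h0, if_pos rfl]
      exact Set.mem_union_right _ rfl
    · by_cases h1 : j = 1 <;>
        simp only [hPv, h0, h1, if_neg, if_pos, reduceIte] <;>
        exact Set.mem_union_left _ (sepTop_mem _)
  have htop : ∀ j (hj : j ∈ N), (Pv j hj).top =
      if j = 0 then P0.top else if j = 1 then T2 else T3 := by
    intro j hj
    by_cases h0 : j = 0 <;> by_cases h1 : j = 1 <;>
      simp [hPv, h0, h1, sepTop_top]
  -- outcome with all three voters
  have hNne : N.Nonempty := ⟨0, by simp [hN]⟩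
  have hQfull : g N Pv = F (insert P0.top {T2, T3}) := by
    have h1 : g N Pv = f N (fun j hj => sepTop ((Pv j hj).top)) :=
      hg N hNne Pv hdom _ (fun j hj => sepTop_mem _) (fun j hj => (sepTop_top _).symm)
    rw [h1, hfF]
    congr 1
    ext T
    rw [mem_distinctTops]
    simp only [Finset.mem_insert, Finset.mem_singleton]
    constructor
    · rintro ⟨j, hj, rfl⟩
      rcases (hmemN j).mp hj with rfl | rfl | rfl
      · left; simp [hPv, sepTop_top]
      · right; left; simp [hPv, sepTop_top]
      · right; right; simp [hPv, sepTop_top]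
    · rintro (rfl | rfl | rfl)
      · exact ⟨0, (hmemN 0).mpr (Or.inl rfl), by simp [hPv, sepTop_top]⟩
      · exact ⟨1, (hmemN 1).mpr (Or.inr (Or.inl rfl)), by simp [hPv, sepTop_top]⟩
      · exact ⟨2, (hmemN 2).mpr (Or.inr (Or.inr rfl)), by simp [hPv, sepTop_top]⟩
  -- outcome after voter 0 leaves
  have h0N : (0 : ℕ) ∈ N := (hmemN 0).mpr (Or.inl rfl)
  have hmemE : ∀ j, j ∈ N.erase 0 ↔ j = 1 ∨ j = 2 := by
    intro j
    rw [Finset.mem_erase, hmemN j]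
    constructor
    · rintro ⟨hj0, rfl | rfl | rfl⟩
      · exact absurd rfl hj0
      · exact Or.inl rfl
      · exact Or.inr rfl
    · rintro (rfl | rfl) <;> simp
  have hEne : (N.erase 0).Nonempty := ⟨1, (hmemE 1).mpr (Or.inl rfl)⟩
  set Pe : Profile (Finset O) (N.erase 0) :=
    (fun j hj => Pv j (Finset.mem_of_mem_erase hj)) with hPeDef
  have hdomE : Pe.inDomain (SepDom O ∪ {P0}) :=
    fun j hj => hdom j (Finset.mem_of_mem_erase hj)
  have hQerase : g (N.erase 0) Pe = F ({T2, T3} : Finset (Finset O)) := by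
    have h1 : g (N.erase 0) Pe = f (N.erase 0) (fun j hj => sepTop ((Pe j hj).top)) :=
      hg _ hEne Pe hdomE _ (fun j hj => sepTop_mem _) (fun j hj => (sepTop_top _).symm)
    rw [h1, hfF]
    congr 1
    ext T
    rw [mem_distinctTops]
    simp only [Finset.mem_insert, Finset.mem_singleton]
    constructor
    · rintro ⟨j, hj, rfl⟩
      rcases (hmemE j).mp hj with rfl | rfl
      · left; simp [hPeDef, hPv, sepTop_top]
      · right; simp [hPeDef, hPv, sepTop_top]
    · rintro (rfl | rfl)
      · exact ⟨1, (hmemE 1).mpr (Or.inl rfl), by simp [hPeDef, hPv, sepTop_top]⟩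
      · exact ⟨2, (hmemE 2).mpr (Or.inr rfl), by simp [hPeDef, hPv, sepTop_top]⟩
  -- derive the contradiction with participation
  have hcard : 2 ≤ N.card := by rw [hN]; decide
  have hp := hpart N hcard Pv hdom 0 h0N
  have hPv0 : Pv 0 h0N = P0 := if_pos rfl
  rw [hPv0] at hp
  unfold Pref.wpref at hp
  rw [hQfull] at hp
  rw [show g (N.erase 0) (fun j hj => Pv j (Finset.mem_of_mem_erase hj)) =
    F ({T2, T3} : Finset (Finset O)) from hQerase] at hp
  exact absurd hp ((@not_le _ P0 _ _).mpr hpref)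

end Aux4
section Aux5
variable {O : Type*} [Fintype O] [DecidableEq O]

lemma card_filter_single (A : Finset O) (y : O) :
    ((({A} : Finset (Finset O))).filter fun T => y ∈ T).card = if y ∈ A then 1 else 0 := by
  rw [Finset.filter_singleton]
  split <;> simp

lemma compL1 (x : O) : Fgt ({∅, {x}} : Finset (Finset O)) = ∅ := by
  ext y
  have hne : (∅ : Finset O) ≠ {x} := Ne.symm (Finset.singleton_ne_empty x)
  rw [mem_Fgt, card_pair _ _ hne, card_filter_pair _ _ hne y]
  by_cases hyx : y = x <;> simp [hyx] <;> omega

lemma compL2 {G : Finset O} {x : O} (hxG : x ∈ G) (hG1 : G ≠ ∅) (hG2 : G ≠ {x}) :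
    Fgt (insert G {∅, {x}} : Finset (Finset O)) = {x} := by
  ext y
  have hne : (∅ : Finset O) ≠ {x} := Ne.symm (Finset.singleton_ne_empty x)
  have hGn : G ∉ ({∅, {x}} : Finset (Finset O)) := by simp [hG1, hG2]
  rw [mem_Fgt, card_triple _ _ _ hGn hne, card_filter_triple _ _ _ hGn hne y]
  by_cases hyx : y = x
  · subst hyx; simp [hxG] <;> omega
  · by_cases hyG : y ∈ G <;> simp [hyx, hyG] <;> omega

lemma compL3 {S : Finset O} {x : O} (hxS : x ∉ S) :
    Fge ({S, insert x S} : Finset (Finset O)) = insert x S := by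
  ext y
  have hne : S ≠ insert x S := fun h => hxS (h ▸ Finset.mem_insert_self x S)
  rw [mem_Fge, card_pair _ _ hne, card_filter_pair _ _ hne y]
  by_cases hyx : y = x
  · subst hyx; simp [hxS] <;> omega
  · by_cases hyS : y ∈ S <;> simp [Finset.mem_insert, hyx, hyS] <;> omega

lemma compL4 {S G : Finset O} {x : O} (hxS : x ∉ S) (hxG : x ∉ G)
    (hGS : G ≠ S) (hGxS : G ≠ insert x S) :
    Fge (insert G {S, insert x S} : Finset (Finset O)) = S := by
  ext y
  have hne : S ≠ insert x S := fun h => hxS (h ▸ Finset.mem_insert_self x S)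
  have hGn : G ∉ ({S, insert x S} : Finset (Finset O)) := by simp [hGS, hGxS]
  rw [mem_Fge, card_triple _ _ _ hGn hne, card_filter_triple _ _ _ hGn hne y]
  by_cases hyx : y = x
  · subst hyx; simp [hxS, hxG] <;> omega
  · by_cases hyG : y ∈ G <;> by_cases hyS : y ∈ S <;>
      simp [Finset.mem_insert, hyx, hyG, hyS] <;> omega

lemma compL5 {S : Finset O} {x : O} (hxS : x ∉ S) :
    Fgt ({S, insert x S} : Finset (Finset O)) = S := by
  ext y
  have hne : S ≠ insert x S := fun h => hxS (h ▸ Finset.mem_insert_self x S)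
  rw [mem_Fgt, card_pair _ _ hne, card_filter_pair _ _ hne y]
  by_cases hyx : y = x
  · subst hyx; simp [hxS] <;> omega
  · by_cases hyS : y ∈ S <;> simp [Finset.mem_insert, hyx, hyS] <;> omega

lemma compL6 {S G : Finset O} {x : O} (hxS : x ∉ S) (hxG : x ∈ G)
    (hGS : G ≠ S) (hGxS : G ≠ insert x S) :
    Fgt (insert G {S, insert x S} : Finset (Finset O)) = insert x S := by
  ext y
  have hne : S ≠ insert x S := fun h => hxS (h ▸ Finset.mem_insert_self x S)
  have hGn : G ∉ ({S, insert x S} : Finset (Finset O)) := by simp [hGS, hGxS]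
  rw [mem_Fgt, card_triple _ _ _ hGn hne, card_filter_triple _ _ _ hGn hne y]
  by_cases hyx : y = x
  · subst hyx; simp [hxS, hxG] <;> omega
  · by_cases hyG : y ∈ G <;> by_cases hyS : y ∈ S <;>
      simp [Finset.mem_insert, hyx, hyG, hyS] <;> omega

lemma compL7 (x : O) : Fgt ({{x}} : Finset (Finset O)) = {x} := by
  ext y
  rw [mem_Fgt, Finset.card_singleton, card_filter_single]
  by_cases hyx : y = x <;> simp [hyx] <;> omega

lemma compL8 {G : Finset O} {x : O} (hxG : x ∉ G) (hGx : G ≠ {x}) :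
    Fgt ({G, {x}} : Finset (Finset O)) = ∅ := by
  ext y
  rw [mem_Fgt, card_pair _ _ hGx, card_filter_pair _ _ hGx y]
  by_cases hyx : y = x
  · subst hyx; simp [hxG] <;> omega
  · by_cases hyG : y ∈ G <;> simp [hyx, hyG] <;> omega

/-- Key lemma: for any non-separable `P0` there is a rule in the class all of whose
tops-only extensions to `𝒮 ∪ {P0}` violate participation. -/
lemma keyB (P0 : Pref (Finset O)) (h0 : P0 ∉ SepDom O) :
    ∃ f ∈ RuleClassG O, ∀ g : Rule (Finset O),
      IsTopsOnlyExtensionOn (SepDom O ∪ {P0}) f g →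
        ¬ ParticipationOn (SepDom O ∪ {P0}) g := by
  have h0' : ¬ Separable P0 := h0
  unfold Separable at h0'
  push_neg at h0'
  obtain ⟨S, x, hxS, hniff⟩ := h0'
  have htopmax : ∀ A : Finset O, P0.le A P0.top :=
    fun A => @Finset.le_max' _ P0 Finset.univ A (Finset.mem_univ A)
  rcases hniff with ⟨h1, h2⟩ | ⟨h1, h2⟩
  · have h2' : P0.lt {x} ∅ :=
      @lt_of_le_of_ne _ P0.toPartialOrder _ _ ((@not_lt _ P0 _ _).mp h2)
        (Finset.singleton_ne_empty x)
    by_cases hxT : x ∈ P0.top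
    · refine ⟨fGt O, fGt_mem, viol Fgt (fGt O) fGt_eq P0 ∅ {x} ?_⟩
      have hG1 : P0.top ≠ ∅ := fun h => absurd (h ▸ hxT) (Finset.notMem_empty x)
      have hG2 : P0.top ≠ {x} := by
        intro h
        have hle := htopmax ∅
        rw [h] at hle
        exact absurd h2' ((@not_lt _ P0 _ _).mpr hle)
      rw [compL2 hxT hG1 hG2, compL1]
      exact h2'
    · refine ⟨fGe O, fGe_mem, viol Fge (fGe O) fGe_eq P0 S (insert x S) ?_⟩
      have h1' : P0.lt S (insert x S) := h1
      have hGS : P0.top ≠ S := by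
        intro h
        have hle := htopmax (insert x S)
        rw [h] at hle
        exact absurd h1' ((@not_lt _ P0 _ _).mpr hle)
      have hGxS : P0.top ≠ insert x S := fun h => hxT (h ▸ Finset.mem_insert_self x S)
      rw [compL4 hxS hxT hGS hGxS, compL3 hxS]
      exact h1'
  · have h1' : P0.lt (insert x S) S :=
      @lt_of_le_of_ne _ P0.toPartialOrder _ _ ((@not_lt _ P0 _ _).mp h1)
        (fun h => hxS (h ▸ Finset.mem_insert_self x S))
    by_cases hxT : x ∈ P0.top
    · refine ⟨fGt O, fGt_mem, viol Fgt (fGt O) fGt_eq P0 S (insert x S) ?_⟩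
      have hGS : P0.top ≠ S := fun h => hxS (h ▸ hxT)
      have hGxS : P0.top ≠ insert x S := by
        intro h
        have hle := htopmax S
        rw [h] at hle
        exact absurd h1' ((@not_lt _ P0 _ _).mpr hle)
      rw [compL6 hxS hxT hGS hGxS, compL5 hxS]
      exact h1'
    · refine ⟨fGt O, fGt_mem, viol Fgt (fGt O) fGt_eq P0 {x} {x} ?_⟩
      have hGx : P0.top ≠ {x} := fun h => hxT (h ▸ Finset.mem_singleton_self x)
      have hpair : ({{x}, {x}} : Finset (Finset O)) = {{x}} := by simp
      rw [hpair, show (insert P0.top {{x}} : Finset (Finset O)) = {P0.top, {x}} from rfl,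
        compL8 hxT hGx, compL7]
      exact h2

end Aux5

/-- The domain `𝒮` of separable preferences is maximal for the class
`𝒢` of tops-only rules satisfying participation: (i) `𝒮` itself satisfies the two
defining conditions of maximality for `𝒢`, and (ii) any domain `𝒮 ⊆ Dstar ⊆ 𝒰_𝒪` that
is maximal for `𝒢` equals `𝒮`. -/
theorem stmt_11 {O : Type*} [Fintype O] [DecidableEq O] (hO : 2 ≤ Fintype.card O) :
    MaximalForG O (SepDom O) (RuleClassG O) ∧
    ∀ Dstar : Set (Pref (Finset O)), SepDom O ⊆ Dstar →
      MaximalForG O Dstar (RuleClassG O) → Dstar = SepDom O := by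
  have hmaxSep : MaximalForG O (SepDom O) (RuleClassG O) := by
    constructor
    · intro f hf g hg N hcard P hP i hi
      have hNne : N.Nonempty := Finset.card_pos.mp (by omega)
      have hEne : (N.erase i).Nonempty := by
        rw [← Finset.card_pos, Finset.card_erase_of_mem hi]; omega
      have h1 : g N P = f N P := hg N hNne P hP P hP (fun _ _ => rfl)
      have h2 : g (N.erase i) (fun j hj => P j (Finset.mem_of_mem_erase hj)) =
          f (N.erase i) (fun j hj => P j (Finset.mem_of_mem_erase hj)) :=
        hg _ hEne _ (fun j hj => hP j (Finset.mem_of_mem_erase hj)) _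
          (fun j hj => hP j (Finset.mem_of_mem_erase hj)) (fun _ _ => rfl)
      unfold Pref.wpref
      rw [h1, h2]
      exact hf.2 N hcard P hP i hi
    · exact fun P0 h0 => keyB P0 h0
  refine ⟨hmaxSep, ?_⟩
  intro Dstar hsub hmax
  apply Set.Subset.antisymm _ hsub
  intro P0 hP0
  by_contra h0
  obtain ⟨f, hfG, hviol⟩ := keyB P0 h0
  obtain ⟨g, hg⟩ := exists_extension f hfG.1 Dstar
  have hpart : ParticipationOn Dstar g := hmax.1 f hfG g hg
  have hsub2 : SepDom O ∪ {P0} ⊆ Dstar :=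
    Set.union_subset hsub (Set.singleton_subset_iff.mpr hP0)
  exact hviol g (ext_mono hsub2 hg) (part_mono hsub2 hpart)
end

section
/- For a profile P_N over the universal domain 𝒰_𝒪, let Õ(P_N) = {i ∈ N : t(P_i) ≠ 𝒪 and 𝒪 P_i S for every S ∈ 2^𝒪 \ {t(P_i), 𝒪}} be the set of voters whose top is not 𝒪 and who rank 𝒪 second. Define the rule f̃ by: f̃(P_N) = t(P_i) if Õ(P_N) is nonempty and all voters in Õ(P_N) have the same top set t(P_i); otherwise f̃(P_N) = 𝒪. Then f̃ satisfies ontoness, false-name-proofness, participation, and object neutrality, but violates tops-onliness. -/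
/-- A preference whose top is not the whole set of objects `𝒪` and which ranks `𝒪`
second (i.e. `𝒪` beats every set other than the top and `𝒪` itself). -/
def ranksUnivSecond {O : Type*} [Fintype O] [DecidableEq O] (p : Pref (Finset O)) : Prop :=
  p.top ≠ (Finset.univ : Finset O) ∧
  ∀ S : Finset O, S ≠ p.top → S ≠ (Finset.univ : Finset O) →
    p.pref (Finset.univ : Finset O) S

open scoped Classical in
/-- The rule `f̃`: if the set `Õ(P_N)` of voters whose top is not `𝒪` and who rank `𝒪`
second is nonempty and all of them share the same top set `T`, the outcome is `T`;
otherwise the outcome is `𝒪`. -/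
noncomputable def fTilde (O : Type*) [Fintype O] [DecidableEq O] : Rule (Finset O) :=
  fun N P =>
    if h : ∃ T : Finset O,
        (∃ i, ∃ hi : i ∈ N, ranksUnivSecond (P i hi) ∧ (P i hi).top = T) ∧
        (∀ j, ∀ hj : j ∈ N, ranksUnivSecond (P j hj) → (P j hj).top = T)
    then h.choose else (Finset.univ : Finset O)

/-! ## Auxiliary material for the proof of Statement 15 -/

section Helpers

variable {A : Type*} [Fintype A] [Nonempty A]

lemma Pref.le_top (p : Pref A) (y : A) : p.le y p.top :=
  @Finset.le_max' A p Finset.univ y (Finset.mem_univ y)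

lemma Pref.top_eq (p : Pref A) (x : A) (h : ∀ y, p.le y x) : p.top = x :=
  @le_antisymm A (@LinearOrder.toPartialOrder A p) _ _
    (@Finset.max'_le A p Finset.univ (@Finset.univ_nonempty A _ _) x (fun y _ => h y))
    (p.le_top x)

lemma Pref.wpref_refl (p : Pref A) (x : A) : p.wpref x x :=
  @le_refl A (@PartialOrder.toPreorder A (@LinearOrder.toPartialOrder A p)) x

lemma Pref.wpref_top (p : Pref A) (y : A) : p.wpref p.top y := p.le_top y

lemma Pref.wpref_of_pref (p : Pref A) {x y : A} (h : p.pref x y) : p.wpref x y :=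
  @le_of_lt A (@PartialOrder.toPreorder A (@LinearOrder.toPartialOrder A p)) _ _ h

lemma Pref.pref_asymm (p : Pref A) {x y : A} (h : p.pref x y) : ¬ p.pref y x :=
  @lt_asymm A (@PartialOrder.toPreorder A (@LinearOrder.toPartialOrder A p)) _ _ h

lemma Pref.relabel_le (p : Pref A) (γ : Equiv.Perm A) (x y : A) :
    (p.relabel γ).le x y ↔ p.le (γ.symm x) (γ.symm y) := Iff.rfl

lemma Pref.relabel_pref (p : Pref A) (γ : Equiv.Perm A) (x y : A) :
    (p.relabel γ).pref x y ↔ p.pref (γ.symm x) (γ.symm y) := Iff.rfl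

lemma Pref.relabel_top (p : Pref A) (γ : Equiv.Perm A) :
    (p.relabel γ).top = γ p.top := by
  apply Pref.top_eq
  intro y
  rw [Pref.relabel_le, Equiv.symm_apply_apply]
  exact p.le_top _

end Helpers

section MyPref

variable {O : Type*} [Fintype O] [DecidableEq O]

/-- Rank function: `a` best, `b` second, rest last. -/
def myRank (a b S : Finset O) : ℕ := if S = a then 2 else if S = b then 1 else 0

noncomputable def myKey (a b : Finset O) : Finset O → ℕ ×ₗ Fin (Fintype.card (Finset O)) :=
  fun S => toLex (myRank a b S, Fintype.equivFin (Finset O) S)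

lemma myKey_inj (a b : Finset O) : Function.Injective (myKey a b) := by
  intro S T h
  have h2 := congrArg (fun x => (ofLex x).2) h
  exact (Fintype.equivFin (Finset O)).injective h2

/-- A preference with top `a` and second-ranked `b` (when `b ≠ a`). -/
noncomputable def myPref (a b : Finset O) : Pref (Finset O) :=
  LinearOrder.lift' (myKey a b) (myKey_inj a b)

lemma myPref_le (a b S T : Finset O) :
    (myPref a b).le S T ↔ myKey a b S ≤ myKey a b T := Iff.rfl

lemma myPref_pref (a b S T : Finset O) :
    (myPref a b).pref S T ↔ myKey a b T < myKey a b S := Iff.rfl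

lemma myRank_self (a b : Finset O) : myRank a b a = 2 := if_pos rfl

lemma myRank_snd (a b : Finset O) (h : b ≠ a) : myRank a b b = 1 := by
  simp [myRank, h]

lemma myRank_other (a b S : Finset O) (h1 : S ≠ a) (h2 : S ≠ b) : myRank a b S = 0 := by
  simp [myRank, h1, h2]

lemma myPref_top (a b : Finset O) : (myPref a b).top = a := by
  apply Pref.top_eq
  intro y
  rw [myPref_le]
  rcases eq_or_ne y a with rfl | hy
  · exact le_refl _
  · have h1 : myRank a b y < myRank a b a := by
      rw [myRank_self]
      rcases eq_or_ne y b with rfl | hy2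
      · rw [myRank_snd a y hy]; omega
      · rw [myRank_other a b y hy hy2]; omega
    exact le_of_lt (Prod.Lex.lt_iff.mpr (Or.inl h1))

lemma myPref_pref_snd (a b S : Finset O) (hba : b ≠ a) (hSa : S ≠ a) (hSb : S ≠ b) :
    (myPref a b).pref b S := by
  rw [myPref_pref]
  refine Prod.Lex.lt_iff.mpr (Or.inl ?_)
  show myRank a b S < myRank a b b
  rw [myRank_other a b S hSa hSb, myRank_snd a b hba]
  omega

lemma ranksUnivSecond_myPref (a : Finset O) (ha : a ≠ Finset.univ) :
    ranksUnivSecond (myPref a Finset.univ) := by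
  constructor
  · rw [myPref_top]; exact ha
  · intro S hS hSu
    rw [myPref_top] at hS
    exact myPref_pref_snd a Finset.univ S (fun h => ha h.symm) hS hSu

/-- The defining condition of `fTilde`. -/
def Cond (N : Finset ℕ) (P : Profile (Finset O) N) (T : Finset O) : Prop :=
  (∃ i, ∃ hi : i ∈ N, ranksUnivSecond (P i hi) ∧ (P i hi).top = T) ∧
  (∀ j, ∀ hj : j ∈ N, ranksUnivSecond (P j hj) → (P j hj).top = T)

lemma Cond.unique {N : Finset ℕ} {P : Profile (Finset O) N} {T T' : Finset O}
    (h : Cond N P T) (h' : Cond N P T') : T = T' := by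
  obtain ⟨⟨i, hi, hr, ht⟩, _⟩ := h
  rw [← ht]
  exact h'.2 i hi hr

lemma fTilde_eq_of_cond {N : Finset ℕ} {P : Profile (Finset O) N} {T : Finset O}
    (h : Cond N P T) : fTilde O N P = T := by
  unfold fTilde
  have hex : ∃ T : Finset O,
      (∃ i, ∃ hi : i ∈ N, ranksUnivSecond (P i hi) ∧ (P i hi).top = T) ∧
      (∀ j, ∀ hj : j ∈ N, ranksUnivSecond (P j hj) → (P j hj).top = T) := ⟨T, h⟩
  rw [dif_pos hex]
  exact Cond.unique hex.choose_spec h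

lemma fTilde_eq_univ {N : Finset ℕ} {P : Profile (Finset O) N}
    (h : ¬ ∃ T, Cond N P T) : fTilde O N P = Finset.univ := by
  unfold fTilde
  rw [dif_neg]
  rintro ⟨T, hT⟩
  exact h ⟨T, hT⟩

end MyPref

/-- For at least two objects, the rule `f̃` satisfies ontoness,
false-name-proofness, participation and object neutrality, but violates tops-onliness. -/
theorem stmt_15 {O : Type*} [Fintype O] [DecidableEq O] (hO : 2 ≤ Fintype.card O) :
    OntoOn Set.univ (fTilde O) ∧ FalseNameProofOn Set.univ (fTilde O) ∧
    ParticipationOn Set.univ (fTilde O) ∧ ObjectNeutralOn Set.univ (fTilde O) ∧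
    ¬ TopsOnlyOn Set.univ (fTilde O) := by
  have hOne : Nonempty O := Fintype.card_pos_iff.mp (by omega)
  refine ⟨?_, ?_, ?_, ?_, ?_⟩
  · -- Ontoness
    intro N hN a
    rcases eq_or_ne a Finset.univ with rfl | ha
    · refine ⟨fun _ _ => myPref Finset.univ ∅, fun _ _ => trivial, ?_⟩
      apply fTilde_eq_univ
      rintro ⟨T, ⟨i, hi, hr, _⟩, _⟩
      exact hr.1 (myPref_top Finset.univ ∅)
    · refine ⟨fun _ _ => myPref a Finset.univ, fun _ _ => trivial, ?_⟩
      obtain ⟨i, hi⟩ := hN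
      exact fTilde_eq_of_cond
        ⟨⟨i, hi, ranksUnivSecond_myPref a ha, myPref_top a Finset.univ⟩,
         fun j hj _ => myPref_top a Finset.univ⟩
  · -- False-name-proofness
    intro N N' hN hN' hdisj P _ i hi hclones
    set p : Pref (Finset O) := P i (Finset.mem_union_left N' hi) with hp
    set Pn : Profile (Finset O) N := fun j hj => P j (Finset.mem_union_left N' hj) with hPn
    by_cases hr : ranksUnivSecond p
    · by_cases hc : ∃ T, Cond N Pn T
      · obtain ⟨T, hT⟩ := hc
        have hTt : T = p.top := (hT.2 i hi hr).symm
        rw [fTilde_eq_of_cond hT, hTt]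
        exact p.wpref_top _
      · have hc2 : ¬ ∃ T, Cond (N ∪ N') P T := by
          rintro ⟨T, hT⟩
          refine hc ⟨T, ⟨i, hi, hr, hT.2 i (Finset.mem_union_left _ hi) hr⟩, ?_⟩
          intro j hj hjr
          exact hT.2 j (Finset.mem_union_left _ hj) hjr
        rw [fTilde_eq_univ hc, fTilde_eq_univ hc2]
        exact p.wpref_refl _
    · have hiff : ∀ T, Cond (N ∪ N') P T ↔ Cond N Pn T := by
        intro T
        constructor
        · rintro ⟨⟨j, hj, hjr, hjt⟩, hall⟩
          rcases Finset.mem_union.mp hj with h1 | h2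
          · exact ⟨⟨j, h1, hjr, hjt⟩, fun k hk hkr =>
              hall k (Finset.mem_union_left _ hk) hkr⟩
          · have he : P j hj = p := hclones j h2
            exact absurd (he ▸ hjr) hr
        · rintro ⟨⟨j, hj, hjr, hjt⟩, hall⟩
          refine ⟨⟨j, Finset.mem_union_left _ hj, hjr, hjt⟩, ?_⟩
          intro k hk hkr
          rcases Finset.mem_union.mp hk with h1 | h2
          · exact hall k h1 hkr
          · have he : P k hk = p := hclones k h2
            exact absurd (he ▸ hkr) hr
      by_cases hc : ∃ T, Cond N Pn T
      · obtain ⟨T, hT⟩ := hc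
        rw [fTilde_eq_of_cond hT, fTilde_eq_of_cond ((hiff T).mpr hT)]
        exact p.wpref_refl _
      · rw [fTilde_eq_univ hc, fTilde_eq_univ (fun ⟨T, hT⟩ => hc ⟨T, (hiff T).mp hT⟩)]
        exact p.wpref_refl _
  · -- Participation
    intro N hcard P _ i hi
    set p : Pref (Finset O) := P i hi with hp
    set Pe : Profile (Finset O) (N.erase i) :=
      fun j hj => P j (Finset.mem_of_mem_erase hj) with hPe
    by_cases hr : ranksUnivSecond p
    · by_cases hc : ∃ T, Cond N P T
      · obtain ⟨T, hT⟩ := hc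
        have hTt : T = p.top := (hT.2 i hi hr).symm
        rw [fTilde_eq_of_cond hT, hTt]
        exact p.wpref_top _
      · rw [fTilde_eq_univ hc]
        by_cases hce : ∃ T, Cond (N.erase i) Pe T
        · obtain ⟨T, hTe⟩ := hce
          rw [fTilde_eq_of_cond hTe]
          obtain ⟨⟨j, hj, hjr, hjt⟩, halle⟩ := hTe
          have hTuniv : T ≠ Finset.univ := hjt ▸ hjr.1
          have hTtop : T ≠ p.top := by
            intro he
            apply hc
            refine ⟨T, ⟨j, Finset.mem_of_mem_erase hj, hjr, hjt⟩, ?_⟩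
            intro k hk hkr
            by_cases hki : k = i
            · subst hki; rw [he]
            · exact halle k (Finset.mem_erase.mpr ⟨hki, hk⟩) hkr
          exact p.wpref_of_pref (hr.2 T hTtop hTuniv)
        · rw [fTilde_eq_univ hce]
          exact p.wpref_refl _
    · have hiff : ∀ T, Cond N P T ↔ Cond (N.erase i) Pe T := by
        intro T
        constructor
        · rintro ⟨⟨j, hj, hjr, hjt⟩, hall⟩
          have hji : j ≠ i := by
            intro he
            subst he
            exact hr hjr
          refine ⟨⟨j, Finset.mem_erase.mpr ⟨hji, hj⟩, hjr, hjt⟩, ?_⟩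
          intro k hk hkr
          exact hall k (Finset.mem_of_mem_erase hk) hkr
        · rintro ⟨⟨j, hj, hjr, hjt⟩, hall⟩
          refine ⟨⟨j, Finset.mem_of_mem_erase hj, hjr, hjt⟩, ?_⟩
          intro k hk hkr
          by_cases hki : k = i
          · subst hki; exact absurd hkr hr
          · exact hall k (Finset.mem_erase.mpr ⟨hki, hk⟩) hkr
      by_cases hc : ∃ T, Cond N P T
      · obtain ⟨T, hT⟩ := hc
        rw [fTilde_eq_of_cond hT, fTilde_eq_of_cond ((hiff T).mp hT)]
        exact p.wpref_refl _
      · rw [fTilde_eq_univ hc, fTilde_eq_univ (fun ⟨T, hT⟩ => hc ⟨T, (hiff T).mpr hT⟩)]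
        exact p.wpref_refl _
  · -- Object neutrality
    intro μ N hN P _
    set γ : Equiv.Perm (Finset O) := μ.finsetCongr with hγ
    have hγu : γ Finset.univ = Finset.univ := by
      rw [hγ, Equiv.finsetCongr_apply, Finset.map_univ_equiv]
    have hγsu : γ.symm Finset.univ = Finset.univ := by
      conv_lhs => rw [← hγu]
      exact γ.symm_apply_apply _
    have hrU : ∀ q : Pref (Finset O), ranksUnivSecond (q.relabel γ) ↔ ranksUnivSecond q := by
      intro q
      unfold ranksUnivSecond
      rw [Pref.relabel_top]
      constructor
      · rintro ⟨h1, h2⟩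
        refine ⟨fun he => h1 (by rw [he, hγu]), ?_⟩
        intro S hS hSu
        have h3 := h2 (γ S) (fun he => hS (γ.injective he))
          (fun he => hSu (by rw [← hγu] at he; exact γ.injective he))
        rw [Pref.relabel_pref, hγsu, γ.symm_apply_apply] at h3
        exact h3
      · rintro ⟨h1, h2⟩
        refine ⟨fun he => h1 (γ.injective (he.trans hγu.symm)), ?_⟩
        intro S hS hSu
        rw [Pref.relabel_pref, hγsu]
        refine h2 (γ.symm S) (fun he => hS ?_) (fun he => hSu ?_)
        · rw [← he, γ.apply_symm_apply]
        · rw [← γ.apply_symm_apply S, he, hγu]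
    have hcond : ∀ T, Cond N (fun i hi => (P i hi).relabel γ) (γ T) ↔ Cond N P T := by
      intro T
      unfold Cond
      constructor
      · rintro ⟨⟨j, hj, hjr, hjt⟩, hall⟩
        rw [Pref.relabel_top] at hjt
        refine ⟨⟨j, hj, (hrU _).mp hjr, γ.injective hjt⟩, ?_⟩
        intro k hk hkr
        have := hall k hk ((hrU _).mpr hkr)
        rw [Pref.relabel_top] at this
        exact γ.injective this
      · rintro ⟨⟨j, hj, hjr, hjt⟩, hall⟩
        refine ⟨⟨j, hj, (hrU _).mpr hjr, by rw [Pref.relabel_top, hjt]⟩, ?_⟩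
        intro k hk hkr
        rw [Pref.relabel_top, hall k hk ((hrU _).mp hkr)]
    have himg : ∀ T : Finset O, T.image μ = γ T := by
      intro T
      rw [hγ, Equiv.finsetCongr_apply, Finset.map_eq_image]
      rfl
    by_cases hc : ∃ T, Cond N P T
    · obtain ⟨T, hT⟩ := hc
      rw [fTilde_eq_of_cond hT, fTilde_eq_of_cond ((hcond T).mpr hT), himg]
    · rw [fTilde_eq_univ hc, fTilde_eq_univ ?_, himg, hγu]
      rintro ⟨T, hT⟩
      exact hc ⟨γ.symm T, (hcond (γ.symm T)).mp (by rwa [γ.apply_symm_apply])⟩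
  · -- Violation of tops-onliness
    intro htop
    haveI := hOne
    obtain ⟨x⟩ := hOne
    have huniv_ne : (Finset.univ : Finset O) ≠ ∅ :=
      Finset.univ_nonempty.ne_empty
    have hx_ne_univ : ({x} : Finset O) ≠ Finset.univ := by
      intro he
      have := congrArg Finset.card he
      rw [Finset.card_singleton, Finset.card_univ] at this
      omega
    set N : Finset ℕ := {0} with hNdef
    have h0 : (0 : ℕ) ∈ N := Finset.mem_singleton_self 0
    set P : Profile (Finset O) N := fun _ _ => myPref ∅ Finset.univ with hP
    set P' : Profile (Finset O) N := fun _ _ => myPref ∅ ({x} : Finset O) with hP'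
    have hfP : fTilde O N P = ∅ :=
      fTilde_eq_of_cond
        ⟨⟨0, h0, ranksUnivSecond_myPref ∅ (fun h => huniv_ne h.symm),
          myPref_top ∅ Finset.univ⟩,
         fun j hj _ => myPref_top ∅ Finset.univ⟩
    have hfP' : fTilde O N P' = Finset.univ := by
      apply fTilde_eq_univ
      rintro ⟨T, ⟨i, hi, hr, _⟩, _⟩
      have h1 := hr.2 ({x} : Finset O)
        (by rw [myPref_top]; exact Finset.singleton_ne_empty x) hx_ne_univ
      have h2 : (myPref (∅ : Finset O) ({x} : Finset O)).pref {x} Finset.univ :=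
        myPref_pref_snd ∅ {x} Finset.univ (Finset.singleton_ne_empty x)
          huniv_ne hx_ne_univ.symm
      exact (myPref ∅ ({x} : Finset O)).pref_asymm h2 h1
    have := htop N ⟨0, h0⟩ P P' (fun _ _ => trivial) (fun _ _ => trivial)
      (fun i hi => by rw [hP, hP', myPref_top, myPref_top])
    rw [hfP, hfP'] at this
    exact huniv_ne this.symm
end
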